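/- Let k ≥ 2 and ε > 0. There exists M₀ such that for all M ≥ M₀ the following holds: if f₁, …, f_{k−1} ∈ ℂ[x] are linearly independent over ℂ, G, f_k ∈ ℂ[x] with f₁^M + ⋯ + f_{k−1}^M + G^M·f_k = 0, and D := max(deg f₁, …, deg f_{k−1}, deg(G^M·f_k)/M), then it is not the case that both deg(G) ≥ ε·D and deg(gcd(G, f_j)) < ε·D/(2k) for all j = 1, …, k−1. -/

import Mathlib

open Polynomial

namespace NLCPF

noncomputable section





lemma li_not_prop {m : ℕ} {v : Fin m → ℂ[X]} (hv : LinearIndependent ℂ v) {i j : Fin m}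
    (hij : i ≠ j) (a : ℂ) (h : v i = a • v j) : False := by
  have hsum : ∑ t, ((if t = i then (1:ℂ) else 0) - (if t = j then a else 0)) • v t = 0 := by
    simp only [sub_smul, Finset.sum_sub_distrib, ite_smul, zero_smul, one_smul]
    rw [Finset.sum_ite_eq' Finset.univ i (fun t => v t),
        Finset.sum_ite_eq' Finset.univ j (fun t => a • v t)]
    simp [h]
  have := Fintype.linearIndependent_iff.mp hv _ hsum i
  simp [hij] at this

lemma coeff_span_zero {S : Set ℂ[X]} {t : ℕ} (hS : ∀ q ∈ S, q.coeff t = 0) {p : ℂ[X]}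
    (hp : p ∈ Submodule.span ℂ S) : p.coeff t = 0 := by
  induction hp using Submodule.span_induction with
  | mem x hx => exact hS x hx
  | zero => simp
  | add x y hx hy ihx ihy => simp [ihx, ihy]
  | smul a x hx ih => simp [ih]

lemma minrep {ι : Type*} [Fintype ι] [DecidableEq ι] (u : ι → ℂ[X]) {q : ℂ[X]} (hq : q ≠ 0) :
    ∀ (S : Finset ι) (c : ι → ℂ), q = ∑ i ∈ S, c i • u i →
    ∃ T : Finset ι, T ⊆ S ∧ T.Nonempty ∧
      (∃ d : ι → ℂ, q = ∑ i ∈ T, d i • u i ∧ ∀ i ∈ T, d i ≠ 0) ∧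
      LinearIndependent ℂ (fun i : T => u i) := by
  intro S
  induction S using Finset.strongInduction with
  | _ S ih =>
    intro c hrep
    by_cases hzero : ∃ i ∈ S, c i = 0
    · obtain ⟨i0, hi0S, hci0⟩ := hzero
      obtain ⟨T, hT, rest⟩ := ih (S.erase i0) (Finset.erase_ssubset hi0S) c (by
        rw [hrep, ← Finset.add_sum_erase S _ hi0S, hci0, zero_smul, zero_add])
      exact ⟨T, hT.trans (Finset.erase_subset _ _), rest⟩
    · push_neg at hzero
      by_cases hli : LinearIndependent ℂ (fun i : S => u i)
      · have hne : S.Nonempty := by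
          rcases S.eq_empty_or_nonempty with h | h
          · exact absurd (by rw [hrep, h, Finset.sum_empty]) hq
          · exact h
        exact ⟨S, le_refl _, hne, ⟨c, hrep, hzero⟩, hli⟩
      · rw [Fintype.not_linearIndependent_iff] at hli
        obtain ⟨g, hgsum, j0, hgj0⟩ := hli
        set g' : ι → ℂ := fun i => if h : i ∈ S then g ⟨i, h⟩ else 0 with hg'
        have hg'sum : ∑ i ∈ S, g' i • u i = 0 := by
          calc ∑ i ∈ S, g' i • u i = ∑ i ∈ S.attach, g' i.1 • u i.1 :=
                (Finset.sum_attach _ _).symm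
            _ = ∑ i : S, g i • u i := by
                apply Finset.sum_congr rfl; intro x _; simp [hg', x.2]
            _ = 0 := hgsum
        have hg'j0 : g' j0.1 ≠ 0 := by simpa [hg', j0.2] using hgj0
        set c' : ι → ℂ := fun i => c i - (c j0.1 / g' j0.1) * g' i with hc'
        have hrep' : q = ∑ i ∈ S, c' i • u i := by
          simp only [hc', sub_smul, Finset.sum_sub_distrib, mul_smul]
          rw [← Finset.smul_sum, hg'sum, smul_zero, sub_zero, hrep]
        have hc'j0 : c' j0.1 = 0 := by
          simp [hc', div_mul_cancel₀ _ hg'j0]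
        obtain ⟨T, hT, rest⟩ := ih (S.erase j0.1) (Finset.erase_ssubset j0.2) c' (by
          rw [hrep', ← Finset.add_sum_erase S _ j0.2, hc'j0, zero_smul, zero_add])
        exact ⟨T, hT.trans (Finset.erase_subset _ _), rest⟩


lemma exists_ord_basis : ∀ {s : ℕ} (v : Fin s → ℂ[X]), LinearIndependent ℂ v →
    ∃ w : Fin s → ℂ[X], (∀ i, w i ≠ 0) ∧
      StrictMono (fun i => (w i).natTrailingDegree) ∧
      (∀ i, w i ∈ Submodule.span ℂ (Set.range v)) ∧
      (∀ i, v i ∈ Submodule.span ℂ (Set.range w)) := by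
  intro s
  induction s with
  | zero =>
    intro v _
    exact ⟨v, fun i => i.elim0, fun i => i.elim0, fun i => i.elim0, fun i => i.elim0⟩
  | succ s ih =>
    intro v hv
    have hvne : ∀ i, v i ≠ 0 := fun i => hv.ne_zero i
    obtain ⟨i0, -, hmin⟩ := Finset.exists_min_image Finset.univ
      (fun i => (v i).natTrailingDegree) ⟨0, Finset.mem_univ 0⟩
    set σ : Equiv.Perm (Fin (s+1)) := Equiv.swap 0 i0 with hσ
    set v' : Fin (s+1) → ℂ[X] := v ∘ σ with hv'def
    have hv' : LinearIndependent ℂ v' := hv.comp σ σ.injective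
    have hv'ne : ∀ i, v' i ≠ 0 := fun i => hvne _
    have hrange : Set.range v' = Set.range v := σ.surjective.range_comp v
    have hv'0 : v' 0 = v i0 := by simp [hv'def, hσ, Equiv.swap_apply_left]
    set n0 := (v' 0).natTrailingDegree with hn0
    have hminle : ∀ i, n0 ≤ (v' i).natTrailingDegree := by
      intro i; rw [hn0, hv'0]; exact hmin _ (Finset.mem_univ _)
    have htc : (v' 0).coeff n0 ≠ 0 :=
      trailingCoeff_nonzero_iff_nonzero.mpr (hv'ne 0)
    set lam : Fin s → ℂ := fun i => (v' i.succ).coeff n0 / (v' 0).coeff n0 with hlam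
    set u : Fin s → ℂ[X] := fun i => v' i.succ - C (lam i) * v' 0 with hu
    have hune : ∀ i, u i ≠ 0 := by
      intro i h
      have h2 : v' i.succ = lam i • v' 0 := by
        rw [smul_eq_C_mul]
        have := sub_eq_zero.mp h
        exact this
      exact li_not_prop hv' (Fin.succ_ne_zero i) _ h2
    have hucoeff_lt : ∀ i, ∀ t ≤ n0, (u i).coeff t = 0 := by
      intro i t ht
      rcases lt_or_eq_of_le ht with h | h
      · have h1 : (v' i.succ).coeff t = 0 :=
          coeff_eq_zero_of_lt_natTrailingDegree (lt_of_lt_of_le h (hminle _))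
        have h2 : (v' 0).coeff t = 0 :=
          coeff_eq_zero_of_lt_natTrailingDegree h
        simp [hu, h1, h2]
      · subst h
        simp only [hu, coeff_sub, coeff_C_mul, hlam]
        rw [div_mul_cancel₀ _ htc, sub_self]
    have hu_ord : ∀ i, n0 + 1 ≤ (u i).natTrailingDegree := by
      intro i
      exact le_natTrailingDegree (hune i) (fun m hm => hucoeff_lt i m (Nat.lt_succ_iff.mp hm))
    have hu_li : LinearIndependent ℂ u := by
      rw [Fintype.linearIndependent_iff]
      intro c hc
      have hsum : ∑ t : Fin (s+1), (Fin.cases (-(∑ i, c i * lam i)) c t : ℂ) • v' t = 0 := by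
        rw [Fin.sum_univ_succ]
        simp only [Fin.cases_zero, Fin.cases_succ]
        have hexp : ∑ i, c i • u i = 0 := hc
        simp only [hu, smul_sub, Finset.sum_sub_distrib] at hexp
        have : ∀ i, c i • (C (lam i) * v' 0) = (c i * lam i) • v' 0 := by
          intro i; rw [← smul_eq_C_mul, smul_smul]
        simp only [this, ← Finset.sum_smul] at hexp
        linear_combination (norm := module) hexp
      have hall := Fintype.linearIndependent_iff.mp hv' _ hsum
      intro i
      simpa using hall i.succ
    obtain ⟨wu, hwune, hwumono, hwuspan, huspan⟩ := ih u hu_li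
    have huspanv : Submodule.span ℂ (Set.range u) ≤ Submodule.span ℂ (Set.range v) := by
      rw [Submodule.span_le]
      rintro q ⟨j, rfl⟩
      have h1 : v' j.succ ∈ Submodule.span ℂ (Set.range v) :=
        Submodule.subset_span ⟨σ j.succ, rfl⟩
      have h2 : v' 0 ∈ Submodule.span ℂ (Set.range v) :=
        Submodule.subset_span ⟨σ 0, rfl⟩
      rw [hu]
      simp only
      rw [← smul_eq_C_mul]
      exact Submodule.sub_mem _ h1 (Submodule.smul_mem _ _ h2)
    have hwu_ord : ∀ i, n0 < (wu i).natTrailingDegree := by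
      intro i
      have hcoeffzero : ∀ t ≤ n0, (wu i).coeff t = 0 := by
        intro t ht
        refine coeff_span_zero ?_ (hwuspan i)
        rintro q ⟨j, rfl⟩; exact hucoeff_lt j t ht
      exact Nat.lt_of_succ_le
        (le_natTrailingDegree (hwune i) (fun m hm => hcoeffzero m (Nat.lt_succ_iff.mp hm)))
    refine ⟨Fin.cases (v' 0) wu, ?_, ?_, ?_, ?_⟩
    · intro i
      induction i using Fin.cases with
      | zero => simpa using hv'ne 0
      | succ j => simpa using hwune j
    · intro a b hab
      induction b using Fin.cases with
      | zero => exact absurd hab (by simp)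
      | succ bj =>
        induction a using Fin.cases with
        | zero =>
          simpa using hwu_ord bj
        | succ aj =>
          have : aj < bj := by rwa [Fin.succ_lt_succ_iff] at hab
          simpa using hwumono this
    · intro i
      induction i using Fin.cases with
      | zero =>
        have hmem : v' 0 ∈ Submodule.span ℂ (Set.range v) :=
          Submodule.subset_span ⟨i0, hv'0.symm⟩
        simpa using hmem
      | succ j =>
        simpa using huspanv (hwuspan j)
    · intro i
      have hvi : v i = v' (σ.symm i) := by
        simp [hv'def]
      rw [hvi]
      have : ∀ t : Fin (s+1), v' t ∈ Submodule.span ℂ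
          (Set.range (Fin.cases (v' 0) wu : Fin (s+1) → ℂ[X])) := by
        intro t
        induction t using Fin.cases with
        | zero =>
          exact Submodule.subset_span ⟨0, by simp⟩
        | succ j =>
          have hexp : v' j.succ = u j + C (lam j) * v' 0 := by rw [hu]; ring
          rw [hexp]
          refine Submodule.add_mem _ ?_ ?_
          · have h1 : Submodule.span ℂ (Set.range wu) ≤ Submodule.span ℂ
                (Set.range (Fin.cases (v' 0) wu : Fin (s+1) → ℂ[X])) := by
              rw [Submodule.span_le]
              rintro q ⟨t, rfl⟩
              exact Submodule.subset_span ⟨t.succ, by simp⟩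
            exact h1 (huspan j)
          · rw [← smul_eq_C_mul]
            exact Submodule.smul_mem _ _ (Submodule.subset_span ⟨0, by simp⟩)
      exact this _





def Wmat {s : ℕ} (v : Fin s → ℂ[X]) : Matrix (Fin s) (Fin s) ℂ[X] :=
  Matrix.of fun i j => derivative^[(j : ℕ)] (v i)

lemma coeff_mul_eq_zero_of_lt_rigid {p q : ℂ[X]} {a b u : ℕ} (hp : ∀ t < a, p.coeff t = 0)
    (hq : ∀ t < b, q.coeff t = 0) (hu : u < a + b) : (p * q).coeff u = 0 := by
  rw [coeff_mul]
  apply Finset.sum_eq_zero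
  rintro ⟨x, y⟩ hxy
  rw [Finset.HasAntidiagonal.mem_antidiagonal] at hxy
  simp only
  rcases lt_or_ge x a with h | h
  · rw [hp x h, zero_mul]
  · rw [hq y (by omega), mul_zero]

lemma coeff_mul_rigid {p q : ℂ[X]} {a b : ℕ} (hp : ∀ t < a, p.coeff t = 0)
    (hq : ∀ t < b, q.coeff t = 0) : (p * q).coeff (a + b) = p.coeff a * q.coeff b := by
  rw [coeff_mul]
  apply Finset.sum_eq_single (a, b)
  · rintro ⟨x, y⟩ hxy hne
    rw [Finset.HasAntidiagonal.mem_antidiagonal] at hxy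
    simp only
    rcases lt_or_ge x a with h | h
    · rw [hp x h, zero_mul]
    · rcases lt_or_ge y b with h' | h'
      · rw [hq y h', mul_zero]
      · exfalso; apply hne; simp only [Prod.mk.injEq]; omega
  · intro h
    have hmem : (a, b) ∈ Finset.HasAntidiagonal.antidiagonal (a + b) := by
      rw [Finset.HasAntidiagonal.mem_antidiagonal]
    exact absurd hmem h

lemma coeff_prod_eq_zero_of_lt_rigid {ι : Type*} (S : Finset ι) (p : ι → ℂ[X]) (t : ι → ℕ)
    (h : ∀ i ∈ S, ∀ t' < t i, (p i).coeff t' = 0) :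
    ∀ u < ∑ i ∈ S, t i, (∏ i ∈ S, p i).coeff u = 0 := by
  induction S using Finset.cons_induction with
  | empty => intro u hu; simp at hu
  | cons a S ha ih =>
    intro u hu
    rw [Finset.prod_cons]
    rw [Finset.sum_cons] at hu
    exact coeff_mul_eq_zero_of_lt_rigid (h a (Finset.mem_cons_self a S))
      (ih (fun i hi => h i (Finset.mem_cons_of_mem hi))) hu

lemma coeff_prod_rigid {ι : Type*} (S : Finset ι) (p : ι → ℂ[X]) (t : ι → ℕ)
    (h : ∀ i ∈ S, ∀ t' < t i, (p i).coeff t' = 0) :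
    (∏ i ∈ S, p i).coeff (∑ i ∈ S, t i) = ∏ i ∈ S, (p i).coeff (t i) := by
  induction S using Finset.cons_induction with
  | empty => simp
  | cons a S ha ih =>
    rw [Finset.prod_cons, Finset.sum_cons, Finset.prod_cons,
      coeff_mul_rigid (h a (Finset.mem_cons_self a S))
        (coeff_prod_eq_zero_of_lt_rigid S p t (fun i hi => h i (Finset.mem_cons_of_mem hi))),
      ih (fun i hi => h i (Finset.mem_cons_of_mem hi))]

lemma fin_le_of_strictMono : ∀ {s : ℕ} {n : Fin s → ℕ}, StrictMono n →
    ∀ i : Fin s, (i : ℕ) ≤ n i := by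
  intro s
  cases s with
  | zero => intro n h i; exact i.elim0
  | succ m =>
    intro n h i
    induction i using Fin.induction with
    | zero => exact Nat.zero_le _
    | succ j ihj =>
      have h1 := h ((Fin.castSucc_lt_succ (i := j)))
      have h2 : ((j.castSucc : Fin (m+1)) : ℕ) = (j : ℕ) := rfl
      have h3 : ((j.succ : Fin (m+1)) : ℕ) = (j : ℕ) + 1 := rfl
      omega

lemma det_Wmat_ne_zero_of_mono {s : ℕ} (w : Fin s → ℂ[X]) (hw : ∀ i, w i ≠ 0)
    (hmono : StrictMono fun i => (w i).natTrailingDegree) : (Wmat w).det ≠ 0 := by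
  set n : Fin s → ℕ := fun i => (w i).natTrailingDegree with hn
  set T := ∑ i, n i with hT
  set J := ∑ i : Fin s, (i : ℕ) with hJ
  have hile : ∀ i : Fin s, (i : ℕ) ≤ n i := fin_le_of_strictMono hmono
  have hJT : J ≤ T := Finset.sum_le_sum (fun i _ => hile i)
  have htc : ∀ i, (w i).coeff (n i) ≠ 0 := fun i =>
    trailingCoeff_nonzero_iff_nonzero.mpr (hw i)
  have hterm : ∀ σ : Equiv.Perm (Fin s),
      (∏ i, Wmat w (σ i) i).coeff (T - J) =
      (∏ i, ((n (σ i)).descFactorial (i : ℕ) : ℂ)) * ∏ i, (w i).coeff (n i) := by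
    intro σ
    have hWmat : ∀ i : Fin s, Wmat w (σ i) i = derivative^[(i : ℕ)] (w (σ i)) := fun i => rfl
    have hvan : ∀ i : Fin s, ∀ t' < n (σ i) - (i : ℕ),
        (derivative^[(i : ℕ)] (w (σ i))).coeff t' = 0 := by
      intro i t' ht'
      rw [coeff_iterate_derivative]
      have hlt : t' + (i : ℕ) < n (σ i) := by omega
      rw [coeff_eq_zero_of_lt_natTrailingDegree hlt, smul_zero]
    by_cases hcase : ∀ i : Fin s, (i : ℕ) ≤ n (σ i)
    · have hsum_tv : ∑ i, (n (σ i) - (i : ℕ)) = T - J := by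
        have h1 : ∑ i, ((n (σ i) - (i : ℕ)) + (i : ℕ)) = ∑ i, n (σ i) :=
          Finset.sum_congr rfl (fun i _ => by have := hcase i; omega)
        rw [Finset.sum_add_distrib] at h1
        have h2 : ∑ i, n (σ i) = T := Equiv.sum_comp σ n
        omega
      simp only [hWmat]
      rw [← hsum_tv, coeff_prod_rigid _ _ _ (fun i _ => hvan i)]
      rw [show (∏ i, (w i).coeff (n i)) = ∏ i, (w (σ i)).coeff (n (σ i)) from
        (Equiv.prod_comp σ (fun i => (w i).coeff (n i))).symm, ← Finset.prod_mul_distrib]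
      apply Finset.prod_congr rfl
      intro i _
      rw [coeff_iterate_derivative]
      have h3 : (n (σ i) - (i : ℕ)) + (i : ℕ) = n (σ i) := by have := hcase i; omega
      rw [h3, nsmul_eq_mul]
    · push_neg at hcase
      obtain ⟨i0, hi0⟩ := hcase
      have hzero : (∏ i : Fin s, derivative^[(i : ℕ)] (w (σ i))).coeff (T - J) = 0 := by
        apply coeff_prod_eq_zero_of_lt_rigid _ _ (fun i => n (σ i) - (i : ℕ))
          (fun i _ => hvan i)
        have h1 : ∑ i, ((n (σ i) - (i : ℕ)) + min (n (σ i)) (i : ℕ)) = ∑ i, n (σ i) :=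
          Finset.sum_congr rfl (fun i _ => by omega)
        rw [Finset.sum_add_distrib] at h1
        have h2 : ∑ i, n (σ i) = T := Equiv.sum_comp σ n
        have h3 : ∑ i, min (n (σ i)) (i : ℕ) < J := by
          apply Finset.sum_lt_sum (fun i _ => min_le_right _ _)
          exact ⟨i0, Finset.mem_univ i0, by omega⟩
        omega
      simp only [hWmat]
      rw [hzero]
      symm
      apply mul_eq_zero_of_left
      apply Finset.prod_eq_zero (Finset.mem_univ i0)
      rw [Nat.descFactorial_eq_zero_iff_lt.mpr hi0, Nat.cast_zero]
  have hdet : (Wmat w).det.coeff (T - J) =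
      (∏ i, (w i).coeff (n i)) *
        (Matrix.of fun i j : Fin s => ((n i).descFactorial (j : ℕ) : ℂ)).det := by
    rw [Matrix.det_apply', Matrix.det_apply', finset_sum_coeff, Finset.mul_sum]
    apply Finset.sum_congr rfl
    intro σ _
    have hic : ((Equiv.Perm.sign σ : ℤ) : ℂ[X]) = C ((Equiv.Perm.sign σ : ℤ) : ℂ) := by
      rw [C_eq_intCast]
    rw [hic, coeff_C_mul, hterm σ]
    simp only [Matrix.of_apply]
    ring
  intro h0
  rw [h0, coeff_zero] at hdet
  have hD : (Matrix.of fun i j : Fin s => ((n i).descFactorial (j : ℕ) : ℂ)).det ≠ 0 := by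
    have heq : (Matrix.of fun i j : Fin s => ((n i).descFactorial (j : ℕ) : ℂ)) =
        Matrix.of fun i j : Fin s => (descPochhammer ℂ (j : ℕ)).eval ((n i : ℂ)) := by
      ext i j
      rw [Matrix.of_apply, Matrix.of_apply, descPochhammer_eval_eq_descFactorial]
    rw [heq, ← Matrix.det_eval_matrixOfPolynomials_eq_det_vandermonde
      (fun i : Fin s => ((n i : ℂ))) (fun j => descPochhammer ℂ (j : ℕ))
      (fun i => descPochhammer_natDegree ℂ (i : ℕ)) (fun i => monic_descPochhammer ℂ (i : ℕ))]
    rw [Matrix.det_vandermonde]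
    rw [Finset.prod_ne_zero_iff]
    intro i _
    rw [Finset.prod_ne_zero_iff]
    intro j hj
    rw [Finset.mem_Ioi] at hj
    rw [sub_ne_zero]
    exact fun hcast => (hmono hj).ne' (Nat.cast_injective hcast)
  rcases mul_eq_zero.mp hdet.symm with h | h
  · exact (Finset.prod_ne_zero_iff.mpr (fun i _ => htc i)) h
  · exact hD h





lemma Wmat_comb {s : ℕ} (v w : Fin s → ℂ[X]) (A : Matrix (Fin s) (Fin s) ℂ)
    (h : ∀ i, v i = ∑ j, A i j • w j) :
    Wmat v = (A.map (C : ℂ → ℂ[X])) * Wmat w := by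
  refine Matrix.ext fun i j => ?_
  rw [Matrix.mul_apply]
  simp only [Wmat, Matrix.of_apply, Matrix.map_apply]
  rw [h i, iterate_derivative_sum]
  apply Finset.sum_congr rfl
  intro k _
  rw [iterate_derivative_smul, smul_eq_C_mul]

theorem det_Wmat_ne_zero {s : ℕ} (v : Fin s → ℂ[X]) (hv : LinearIndependent ℂ v) :
    (Wmat v).det ≠ 0 := by
  obtain ⟨w, hwne, hwmono, hwspan, hvspan⟩ := exists_ord_basis v hv
  have hA : ∀ i, ∃ c : Fin s → ℂ, ∑ j, c j • w j = v i := by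
    intro i
    have h := hvspan i
    rwa [Submodule.mem_span_range_iff_exists_fun] at h
  choose A hA using hA
  have hB : ∀ i, ∃ c : Fin s → ℂ, ∑ j, c j • v j = w i := by
    intro i
    have h := hwspan i
    rwa [Submodule.mem_span_range_iff_exists_fun] at h
  choose B hB using hB
  have hAB : (Matrix.of A) * (Matrix.of B) = 1 := by
    ext i k
    have hcomb : ∑ k, (∑ j, A i j * B j k) • v k = v i := by
      rw [← hA i]
      calc ∑ k, (∑ j, A i j * B j k) • v k
          = ∑ k, ∑ j, (A i j * B j k) • v k := by
            apply Finset.sum_congr rfl; intro k _; rw [Finset.sum_smul]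
        _ = ∑ j, ∑ k, (A i j * B j k) • v k := Finset.sum_comm
        _ = ∑ j, A i j • (∑ k, B j k • v k) := by
            apply Finset.sum_congr rfl; intro j _
            rw [Finset.smul_sum]
            apply Finset.sum_congr rfl; intro k _; rw [mul_smul]
        _ = ∑ j, A i j • w j := by
            apply Finset.sum_congr rfl; intro j _; rw [hB j]
    have hdelta : ∑ k, (if i = k then (1:ℂ) else 0) • v k = v i := by
      simp only [ite_smul, one_smul, zero_smul]
      rw [Finset.sum_ite_eq Finset.univ i (fun k => v k)]
      simp
    have hd : ∑ k, ((∑ j, A i j * B j k) - (if i = k then 1 else 0)) • v k = 0 := by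
      simp only [sub_smul, Finset.sum_sub_distrib, hcomb, hdelta, sub_self]
    have hz := Fintype.linearIndependent_iff.mp hv _ hd k
    have : (∑ j, A i j * B j k) = (if i = k then (1:ℂ) else 0) := by
      have := sub_eq_zero.mp hz
      exact this
    rw [Matrix.mul_apply]
    simp only [Matrix.of_apply]
    rw [this, Matrix.one_apply]
  have hdetA : (Matrix.of A).det ≠ 0 := by
    intro h
    have h2 := congrArg Matrix.det hAB
    rw [Matrix.det_mul, h, zero_mul, Matrix.det_one] at h2
    exact zero_ne_one h2
  have hWv : Wmat v = ((Matrix.of A).map (C : ℂ → ℂ[X])) * Wmat w :=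
    Wmat_comb v w (Matrix.of A) (fun i => (hA i).symm)
  rw [hWv, Matrix.det_mul]
  apply mul_ne_zero
  · have hmm : (Matrix.of A).map (C : ℂ → ℂ[X]) =
        (Polynomial.C : ℂ →+* ℂ[X]).mapMatrix (Matrix.of A) := by
      rw [RingHom.mapMatrix_apply]
    rw [hmm, ← RingHom.map_det]
    exact Polynomial.C_ne_zero.mpr hdetA
  · exact det_Wmat_ne_zero_of_mono w hwne hwmono



def Efac (Mn : ℕ) (f r : ℂ[X]) : ℕ → ℂ[X]
  | 0 => r
  | j+1 => C ((Mn - j : ℕ) : ℂ) * (derivative f * Efac Mn f r j)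
      + f * derivative (Efac Mn f r j)

lemma iterD_pow_mul (Mn : ℕ) (f r : ℂ[X]) : ∀ j, j ≤ Mn →
    derivative^[j] (f ^ Mn * r) = f ^ (Mn - j) * Efac Mn f r j := by
  intro j
  induction j with
  | zero => intro _; simp [Efac]
  | succ j ih =>
    intro hj
    rw [Function.iterate_succ_apply', ih (by omega)]
    rw [derivative_mul, derivative_pow]
    have hpow : f ^ (Mn - j) = f ^ (Mn - (j+1)) * f := by
      have h1 : Mn - j = (Mn - (j+1)) + 1 := by omega
      rw [h1, pow_succ]
    have hpow2 : f ^ (Mn - j - 1) = f ^ (Mn - (j+1)) := by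
      have h1 : Mn - j - 1 = Mn - (j+1) := by omega
      rw [h1]
    rw [hpow2]
    have hcast : ((Mn - j : ℕ) : ℂ[X]) = C ((Mn - j : ℕ) : ℂ) := by
      rw [C_eq_natCast]
    calc C ((Mn - j : ℕ) : ℂ) * f ^ (Mn - (j+1)) * derivative f * Efac Mn f r j
          + f ^ (Mn - j) * derivative (Efac Mn f r j)
        = f ^ (Mn - (j+1)) * (C ((Mn - j : ℕ) : ℂ) * (derivative f * Efac Mn f r j)
            + f * derivative (Efac Mn f r j)) := by rw [hpow]; ring
      _ = f ^ (Mn - (j+1)) * Efac Mn f r (j+1) := rfl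

lemma Efac_natDegree (Mn : ℕ) (f r : ℂ[X]) :
    ∀ j, (Efac Mn f r j).natDegree ≤ j * f.natDegree + r.natDegree := by
  intro j
  induction j with
  | zero => simp [Efac]
  | succ j ih =>
    show (C ((Mn - j : ℕ) : ℂ) * (derivative f * Efac Mn f r j)
      + f * derivative (Efac Mn f r j)).natDegree ≤ _
    refine le_trans (natDegree_add_le _ _) (max_le ?_ ?_)
    · refine le_trans (natDegree_C_mul_le _ _) ?_
      refine le_trans natDegree_mul_le ?_
      have hd : (derivative f).natDegree ≤ f.natDegree :=
        le_trans (natDegree_derivative_le f) (Nat.sub_le _ _)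
      have : (j+1) * f.natDegree + r.natDegree
          = f.natDegree + (j * f.natDegree + r.natDegree) := by ring
      omega
    · refine le_trans natDegree_mul_le ?_
      have hd : (derivative (Efac Mn f r j)).natDegree ≤ j * f.natDegree + r.natDegree :=
        le_trans (le_trans (natDegree_derivative_le _) (Nat.sub_le _ _)) ih
      have : (j+1) * f.natDegree + r.natDegree
          = f.natDegree + (j * f.natDegree + r.natDegree) := by ring
      omega

lemma pow_sub_dvd_iterD (Mn j e : ℕ) (f r : ℂ[X]) (hj : j ≤ Mn) (he : e ≤ Mn - j) :
    f ^ e ∣ derivative^[j] (f ^ Mn * r) := by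
  rw [iterD_pow_mul Mn f r j hj]
  exact Dvd.dvd.mul_right (pow_dvd_pow f he) _

lemma rm_prod {ι : Type*} (S : Finset ι) (g : ι → ℂ[X]) (hg : ∀ i ∈ S, g i ≠ 0) (a : ℂ) :
    (∏ i ∈ S, g i).rootMultiplicity a = ∑ i ∈ S, (g i).rootMultiplicity a := by
  induction S using Finset.cons_induction with
  | empty => rw [Finset.prod_empty, Finset.sum_empty, ← C_1, rootMultiplicity_C]
  | cons b S hb ih =>
    rw [Finset.prod_cons, Finset.sum_cons,
      rootMultiplicity_mul (mul_ne_zero (hg b (Finset.mem_cons_self b S))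
        (Finset.prod_ne_zero_iff.mpr (fun i hi => hg i (Finset.mem_cons_of_mem hi)))),
      ih (fun i hi => hg i (Finset.mem_cons_of_mem hi))]

lemma rm_pow (p : ℂ[X]) (hp : p ≠ 0) (n : ℕ) (a : ℂ) :
    (p ^ n).rootMultiplicity a = n * p.rootMultiplicity a := by
  induction n with
  | zero => rw [pow_zero, ← C_1, rootMultiplicity_C, zero_mul]
  | succ n ih =>
    rw [pow_succ, rootMultiplicity_mul (mul_ne_zero (pow_ne_zero _ hp) hp), ih]
    ring

lemma prod_dvd_det {s : ℕ} (N : Matrix (Fin s) (Fin s) ℂ[X]) (d : Fin s → ℂ[X])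
    (h : ∀ i j, d i ∣ N i j) : (∏ i, d i) ∣ N.det := by
  rw [Matrix.det_apply']
  apply Finset.dvd_sum
  intro σ _
  apply Dvd.dvd.mul_left
  rw [show (∏ i, d i) = ∏ i, d (σ i) from (Equiv.prod_comp σ d).symm]
  exact Finset.prod_dvd_prod_of_dvd _ _ (fun i _ => h (σ i) i)

lemma natDegree_det_le {s : ℕ} (N : Matrix (Fin s) (Fin s) ℂ[X]) (b : Fin s → ℕ)
    (h : ∀ i j, (N i j).natDegree ≤ b i) : N.det.natDegree ≤ ∑ i, b i := by
  rw [Matrix.det_apply']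
  apply natDegree_sum_le_of_forall_le
  intro σ _
  refine le_trans natDegree_mul_le ?_
  rw [natDegree_intCast, Nat.zero_add]
  refine le_trans (natDegree_prod_le Finset.univ (fun i => N (σ i) i)) ?_
  rw [show (∑ i, b i) = ∑ i, b (σ i) from (Equiv.sum_comp σ b).symm]
  exact Finset.sum_le_sum (fun i _ => h (σ i) i)

lemma sum_rm_le_natDegree (p : ℂ[X]) (hp : p ≠ 0) (S : Finset ℂ) :
    ∑ a ∈ S, p.rootMultiplicity a ≤ p.natDegree := by
  classical
  have h1 : ∑ a ∈ S, p.rootMultiplicity a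
      = ∑ a ∈ S ∩ p.roots.toFinset, p.rootMultiplicity a := by
    refine (Finset.sum_subset Finset.inter_subset_left ?_).symm
    intro a haS hanot
    have : a ∉ p.roots.toFinset := fun hc => hanot (Finset.mem_inter.mpr ⟨haS, hc⟩)
    rw [Multiset.mem_toFinset] at this
    rw [← count_roots, Multiset.count_eq_zero]
    exact this
  rw [h1]
  calc ∑ a ∈ S ∩ p.roots.toFinset, p.rootMultiplicity a
      ≤ ∑ a ∈ p.roots.toFinset, p.rootMultiplicity a :=
        Finset.sum_le_sum_of_subset Finset.inter_subset_right
    _ = ∑ a ∈ p.roots.toFinset, p.roots.count a :=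
        Finset.sum_congr rfl (fun a _ => (count_roots p).symm)
    _ = Multiset.card p.roots := Multiset.toFinset_sum_count_eq _
    _ ≤ p.natDegree := card_roots' p

lemma sum_rm_eq_natDegree (p : ℂ[X]) (hp : p ≠ 0) :
    ∑ a ∈ p.roots.toFinset, p.rootMultiplicity a = p.natDegree := by
  have hsplit : Multiset.card p.roots = p.natDegree :=
    IsAlgClosed.card_roots_eq_natDegree
  calc ∑ a ∈ p.roots.toFinset, p.rootMultiplicity a
      = ∑ a ∈ p.roots.toFinset, p.roots.count a :=
        Finset.sum_congr rfl (fun a _ => (count_roots p).symm)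
    _ = Multiset.card p.roots := Multiset.toFinset_sum_count_eq _
    _ = p.natDegree := hsplit

lemma min_rm_le_rm_gcd {G f : ℂ[X]} (hG : G ≠ 0) (a : ℂ) :
    min (G.rootMultiplicity a) (f.rootMultiplicity a) ≤
      (EuclideanDomain.gcd G f).rootMultiplicity a := by
  have hgcd : EuclideanDomain.gcd G f ≠ 0 := by
    intro h
    exact hG (EuclideanDomain.gcd_eq_zero_iff.mp h).1
  rw [le_rootMultiplicity_iff hgcd]
  apply EuclideanDomain.dvd_gcd
  · exact dvd_trans (pow_dvd_pow _ (min_le_left _ _)) (pow_rootMultiplicity_dvd G a)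
  · exact dvd_trans (pow_dvd_pow _ (min_le_right _ _)) (pow_rootMultiplicity_dvd f a)




lemma core {s M : ℕ} (hs : 0 < s) (hsM : s ≤ M) (f : Fin s → ℂ[X]) (hf0 : ∀ i, f i ≠ 0)
    (hli : LinearIndependent ℂ fun i => f i ^ M) (c : Fin s → ℂ)
    (A R : ℂ[X]) (hA : A ≠ 0) (hR : R ≠ 0)
    (hrel : A ^ M * R = ∑ i, c i • f i ^ M) (sel : ℂ → Fin s) (hsel : ∀ a, c (sel a) ≠ 0) :
    (M + 1 - s) * (∑ a ∈ A.roots.toFinset, (A.rootMultiplicity a -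
        min (A.rootMultiplicity a) ((f (sel a)).rootMultiplicity a)))
      ≤ (s - 1) * ∑ i, (f i).natDegree := by
  classical
  set P : Matrix (Fin s) (Fin s) ℂ[X] :=
    Matrix.of (fun i j => f i ^ (s - 1 - (j : ℕ)) * Efac M (f i) 1 (j : ℕ)) with hPdef
  have hentry : ∀ i j, Wmat (fun i => f i ^ M) i j = f i ^ (M + 1 - s) * P i j := by
    intro i j
    show derivative^[(j : ℕ)] (f i ^ M) = _
    have hjM : (j : ℕ) ≤ M := by have := j.isLt; omega
    have h0 : f i ^ M = f i ^ M * 1 := (mul_one _).symm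
    rw [h0, iterD_pow_mul M (f i) 1 (j : ℕ) hjM]
    have h1 : M - (j : ℕ) = (M + 1 - s) + (s - 1 - (j : ℕ)) := by
      have := j.isLt; omega
    rw [h1, pow_add, hPdef]
    simp only [Matrix.of_apply]
    ring
  have hWfact : (Wmat (fun i => f i ^ M)).det = (∏ i, f i ^ (M + 1 - s)) * P.det := by
    have heq : Wmat (fun i => f i ^ M)
        = Matrix.of (fun i j => f i ^ (M + 1 - s) * P i j) := Matrix.ext hentry
    rw [heq, Matrix.det_mul_column]
  have hWne : (Wmat (fun i => f i ^ M)).det ≠ 0 := det_Wmat_ne_zero _ hli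
  have hPne : P.det ≠ 0 := by
    intro h; rw [hWfact, h, mul_zero] at hWne; exact hWne rfl
  have hprodne : (∏ i, f i ^ (M + 1 - s)) ≠ 0 :=
    Finset.prod_ne_zero_iff.mpr (fun i _ => pow_ne_zero _ (hf0 i))
  have hPdeg : P.det.natDegree ≤ (s - 1) * ∑ i, (f i).natDegree := by
    rw [Finset.mul_sum]
    apply natDegree_det_le
    intro i j
    refine le_trans natDegree_mul_le ?_
    have h1 : (f i ^ (s - 1 - (j : ℕ))).natDegree = (s - 1 - (j : ℕ)) * (f i).natDegree :=
      natDegree_pow _ _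
    have h2 := Efac_natDegree M (f i) 1 (j : ℕ)
    rw [natDegree_one] at h2
    have h3 : (s - 1 - (j : ℕ)) + (j : ℕ) = s - 1 := by have := j.isLt; omega
    have h4 : (s - 1 - (j : ℕ)) * (f i).natDegree + (j : ℕ) * (f i).natDegree
        = (s - 1) * (f i).natDegree := by rw [← add_mul, h3]
    try simp only [hPdef, Matrix.of_apply]
    change (f i ^ (s - 1 - (j : ℕ))).natDegree + _ ≤ _
    omega
  -- per-root bound
  have hkey : ∀ a ∈ A.roots.toFinset,
      (M + 1 - s) * (A.rootMultiplicity a -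
        min (A.rootMultiplicity a) ((f (sel a)).rootMultiplicity a))
      ≤ P.det.rootMultiplicity a := by
    intro a _
    set i0 := sel a with hi0
    set W := Wmat (fun i => f i ^ M) with hWdef
    set N' : Matrix (Fin s) (Fin s) ℂ[X] :=
      W.updateRow i0 (fun j => derivative^[(j : ℕ)] (A ^ M * R)) with hN'
    have hrow : (fun j : Fin s => derivative^[(j : ℕ)] (A ^ M * R))
        = ∑ i, (C (c i) : ℂ[X]) • W i := by
      funext j
      rw [hrel, iterate_derivative_sum]
      simp only [Finset.sum_apply, Pi.smul_apply, smul_eq_mul]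
      apply Finset.sum_congr rfl
      intro i _
      rw [iterate_derivative_smul, smul_eq_C_mul]
      rfl
    have hdetN' : N'.det = C (c i0) * W.det := by
      rw [hN', hrow, Matrix.det_updateRow_sum, smul_eq_mul]
    have hCne : (C (c i0) : ℂ[X]) ≠ 0 := by
      rw [Ne, Polynomial.C_eq_zero]
      exact hsel a
    have hNdetne : N'.det ≠ 0 := by
      rw [hdetN']
      exact mul_ne_zero hCne hWne
    set m := A.rootMultiplicity a with hm
    set e : Fin s → ℕ := fun i => if i = i0 then (M + 1 - s) * m
      else (M + 1 - s) * ((f i).rootMultiplicity a) with he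
    have hdvd : (∏ i, (X - Polynomial.C a) ^ e i) ∣ N'.det := by
      apply prod_dvd_det
      intro i j
      by_cases hi : i = i0
      · subst hi
        have hgoal : (X - Polynomial.C a) ^ ((M + 1 - s) * m) ∣ N' i0 j := by
          rw [hN', Matrix.updateRow_self]
          have hjM : (j : ℕ) ≤ M := by have := j.isLt; omega
          refine dvd_trans ?_ (pow_sub_dvd_iterD M (j : ℕ) (M + 1 - s) A R hjM (by
            have := j.isLt; omega))
          have hpm : (X - Polynomial.C a) ^ ((M + 1 - s) * m)
              = ((X - Polynomial.C a) ^ m) ^ (M + 1 - s) := by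
            rw [mul_comm, pow_mul]
          rw [hpm]
          exact pow_dvd_pow_of_dvd (pow_rootMultiplicity_dvd A a) _
        simpa [he] using hgoal
      · have hgoal : (X - Polynomial.C a) ^ ((M + 1 - s) * ((f i).rootMultiplicity a))
            ∣ N' i j := by
          rw [hN', Matrix.updateRow_ne hi, hentry i j]
          refine Dvd.dvd.mul_right ?_ _
          have hpm : (X - Polynomial.C a) ^ ((M + 1 - s) * ((f i).rootMultiplicity a))
              = ((X - Polynomial.C a) ^ ((f i).rootMultiplicity a)) ^ (M + 1 - s) := by
            rw [mul_comm, pow_mul]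
          rw [hpm]
          exact pow_dvd_pow_of_dvd (pow_rootMultiplicity_dvd (f i) a) _
        simpa [he, if_neg hi] using hgoal
    have h1 : ∑ i, e i ≤ N'.det.rootMultiplicity a := by
      rw [le_rootMultiplicity_iff hNdetne, ← Finset.prod_pow_eq_pow_sum]
      exact hdvd
    have h2 : N'.det.rootMultiplicity a = W.det.rootMultiplicity a := by
      rw [hdetN', rootMultiplicity_mul (mul_ne_zero hCne hWne), rootMultiplicity_C, zero_add]
    have h3 : W.det.rootMultiplicity a
        = (M + 1 - s) * (∑ i, (f i).rootMultiplicity a) + P.det.rootMultiplicity a := by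
      rw [hWdef, hWfact, rootMultiplicity_mul (mul_ne_zero hprodne hPne),
        rm_prod Finset.univ _ (fun i _ => pow_ne_zero _ (hf0 i)) a]
      congr 1
      rw [Finset.mul_sum]
      apply Finset.sum_congr rfl
      intro i _
      rw [rm_pow (f i) (hf0 i) _ a]
    -- sum of e
    have h4 : ∑ i, e i = (M + 1 - s) * m
        + ∑ i ∈ Finset.univ.erase i0, (M + 1 - s) * ((f i).rootMultiplicity a) := by
      rw [← Finset.add_sum_erase _ _ (Finset.mem_univ i0), he]
      simp only [if_pos rfl]
      congr 1
      apply Finset.sum_congr rfl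
      intro i hi
      rw [if_neg (Finset.ne_of_mem_erase hi)]
    have h5 : ∑ i, (f i).rootMultiplicity a = (f i0).rootMultiplicity a
        + ∑ i ∈ Finset.univ.erase i0, (f i).rootMultiplicity a :=
      (Finset.add_sum_erase _ _ (Finset.mem_univ i0)).symm
    -- combine
    have hcomb : (M + 1 - s) * m ≤ (M + 1 - s) * ((f i0).rootMultiplicity a)
        + P.det.rootMultiplicity a := by
      have := h1
      rw [h2, h3, h4, h5] at *
      have hmulsum : (M + 1 - s) * ((f i0).rootMultiplicity a
          + ∑ i ∈ Finset.univ.erase i0, (f i).rootMultiplicity a)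
          = (M + 1 - s) * ((f i0).rootMultiplicity a)
          + ∑ i ∈ Finset.univ.erase i0, (M + 1 - s) * ((f i).rootMultiplicity a) := by
        rw [Nat.mul_add, Finset.mul_sum]
      omega
    rcases le_or_gt m ((f i0).rootMultiplicity a) with hle | hlt
    · rw [min_eq_left hle, Nat.sub_self, Nat.mul_zero]
      exact Nat.zero_le _
    · rw [min_eq_right hlt.le]
      have hfin : (M + 1 - s) * (m - (f i0).rootMultiplicity a)
          + (M + 1 - s) * ((f i0).rootMultiplicity a) = (M + 1 - s) * m := by
        rw [← Nat.mul_add]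
        congr 1
        omega
      omega
  -- final summation
  calc (M + 1 - s) * (∑ a ∈ A.roots.toFinset, (A.rootMultiplicity a -
        min (A.rootMultiplicity a) ((f (sel a)).rootMultiplicity a)))
      = ∑ a ∈ A.roots.toFinset, (M + 1 - s) * (A.rootMultiplicity a -
        min (A.rootMultiplicity a) ((f (sel a)).rootMultiplicity a)) := Finset.mul_sum _ _ _
    _ ≤ ∑ a ∈ A.roots.toFinset, P.det.rootMultiplicity a := Finset.sum_le_sum hkey
    _ ≤ P.det.natDegree := sum_rm_le_natDegree _ hPne _
    _ ≤ (s - 1) * ∑ i, (f i).natDegree := hPdeg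



lemma core_finset {ι : Type*} [Fintype ι] [DecidableEq ι] {M : ℕ} (T : Finset ι)
    (hT : T.Nonempty) (hTM : T.card ≤ M) (f : ι → ℂ[X]) (hf0 : ∀ i ∈ T, f i ≠ 0)
    (hli : LinearIndependent ℂ (fun i : T => f i ^ M)) (c : ι → ℂ)
    (A R : ℂ[X]) (hA : A ≠ 0) (hR : R ≠ 0)
    (hrel : A ^ M * R = ∑ i ∈ T, c i • f i ^ M)
    (sel : ℂ → ι) (hselT : ∀ a, sel a ∈ T) (hsel : ∀ a, c (sel a) ≠ 0) :
    (M + 1 - T.card) * (∑ a ∈ A.roots.toFinset, (A.rootMultiplicity a -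
        min (A.rootMultiplicity a) ((f (sel a)).rootMultiplicity a)))
      ≤ (T.card - 1) * ∑ i ∈ T, (f i).natDegree := by
  classical
  set s := T.card with hs
  set eqv : Fin s ≃ {x // x ∈ T} := T.equivFin.symm with heqv
  have htrans : ∀ (g : ι → ℂ[X]), ∑ i ∈ T, g i = ∑ t : Fin s, g (eqv t) := by
    intro g
    rw [← Finset.sum_attach T g]
    exact (Equiv.sum_comp eqv (fun i : {x // x ∈ T} => g i)).symm
  have htransN : ∀ (g : ι → ℕ), ∑ i ∈ T, g i = ∑ t : Fin s, g (eqv t) := by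
    intro g
    rw [← Finset.sum_attach T g]
    exact (Equiv.sum_comp eqv (fun i : {x // x ∈ T} => g i)).symm
  have hcore := core (s := s) (M := M) hT.card_pos hTM
    (fun t => f (eqv t)) (fun t => hf0 _ (eqv t).2)
    (by
      have : (fun t : Fin s => f (eqv t) ^ M) = (fun i : T => f i ^ M) ∘ eqv := rfl
      rw [this]
      exact hli.comp eqv eqv.injective)
    (fun t => c (eqv t)) A R hA hR
    (by
      rw [hrel, htrans (fun i => c i • f i ^ M)])
    (fun a => eqv.symm ⟨sel a, hselT a⟩)
    (fun a => by simpa using hsel a)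
  have hfix : ∀ a : ℂ, f (eqv (eqv.symm ⟨sel a, hselT a⟩) : ι) = f (sel a) := by
    intro a; rw [Equiv.apply_symm_apply]
  calc (M + 1 - T.card) * (∑ a ∈ A.roots.toFinset, (A.rootMultiplicity a -
        min (A.rootMultiplicity a) ((f (sel a)).rootMultiplicity a)))
      = (M + 1 - s) * (∑ a ∈ A.roots.toFinset, (A.rootMultiplicity a -
        min (A.rootMultiplicity a)
          ((f (eqv (eqv.symm ⟨sel a, hselT a⟩) : ι)).rootMultiplicity a))) := by
        congr 1
        apply Finset.sum_congr rfl
        intro a _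
        rw [hfix a]
    _ ≤ (s - 1) * ∑ t : Fin s, (f (eqv t)).natDegree := hcore
    _ = (T.card - 1) * ∑ i ∈ T, (f i).natDegree := by
        rw [htransN (fun i => (f i).natDegree)]



lemma sum_pow_eq_zero_contra {m M : ℕ} (hm : 0 < m) (f : Fin m → ℂ[X])
    (hf : LinearIndependent ℂ f) (hM : m * m + m + 1 ≤ M)
    (hsum : ∑ i, f i ^ M = 0) : False := by
  classical
  have hf0 : ∀ i, f i ≠ 0 := fun i => hf.ne_zero i
  set istar : Fin m := ⟨0, hm⟩ with histar
  have hq : f istar ^ M ≠ 0 := pow_ne_zero _ (hf0 istar)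
  have hrep : f istar ^ M = ∑ i ∈ Finset.univ.erase istar, (-1 : ℂ) • f i ^ M := by
    have h1 := Finset.add_sum_erase Finset.univ (fun i => f i ^ M) (Finset.mem_univ istar)
    try simp only at h1
    rw [hsum] at h1
    have h2 : ∑ i ∈ Finset.univ.erase istar, (-1 : ℂ) • f i ^ M
        = - ∑ i ∈ Finset.univ.erase istar, f i ^ M := by
      rw [← Finset.sum_neg_distrib]
      apply Finset.sum_congr rfl
      intro i _
      rw [neg_one_smul]
    rw [h2]
    linear_combination h1
  obtain ⟨T, hTsub, hTne, ⟨d, hdrep, hdne⟩, hTli⟩ :=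
    minrep (fun i => f i ^ M) hq (Finset.univ.erase istar) (fun _ => (-1 : ℂ)) hrep
  have histarT : istar ∉ T := fun h => Finset.notMem_erase istar Finset.univ (hTsub h)
  set base : Finset (Fin m) := insert istar T with hbase
  obtain ⟨jstar, hjmem, hjmax⟩ := Finset.exists_max_image base (fun i => (f i).natDegree)
    ⟨istar, Finset.mem_insert_self _ _⟩
  -- build representation of f jstar ^ M over base.erase jstar
  have hrep2 : ∃ c2 : Fin m → ℂ, ∃ S2 : Finset (Fin m), S2 ⊆ base.erase jstar ∧
      f jstar ^ M = ∑ i ∈ S2, c2 i • f i ^ M := by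
    rcases Finset.mem_insert.mp hjmem with hji | hjT
    · refine ⟨d, T, ?_, ?_⟩
      · rw [hji, hbase, Finset.erase_insert histarT]
      · rw [hji]; exact hdrep
    · have hdj : d jstar ≠ 0 := hdne jstar hjT
      refine ⟨fun i => if i = istar then (d jstar)⁻¹ else -((d jstar)⁻¹ * d i),
        insert istar (T.erase jstar), ?_, ?_⟩
      · intro x hx
        rcases Finset.mem_insert.mp hx with h | h
        · subst h
          refine Finset.mem_erase.mpr ⟨?_, Finset.mem_insert_self _ _⟩
          intro hxx; rw [hxx] at histarT; exact histarT hjT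
        · exact Finset.mem_erase.mpr ⟨(Finset.mem_erase.mp h).1,
            Finset.mem_insert_of_mem (Finset.mem_erase.mp h).2⟩
      · have histar' : istar ∉ T.erase jstar := fun h => histarT (Finset.mem_of_mem_erase h)
        rw [Finset.sum_insert histar']
        beta_reduce
        rw [if_pos rfl]
        have hTsum : f istar ^ M = d jstar • f jstar ^ M + ∑ i ∈ T.erase jstar, d i • f i ^ M := by
          rw [hdrep, ← Finset.add_sum_erase _ _ hjT]
        have hsum2 : ∑ i ∈ T.erase jstar,
            (if i = istar then (d jstar)⁻¹ else -((d jstar)⁻¹ * d i)) • f i ^ M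
            = ∑ i ∈ T.erase jstar, (-((d jstar)⁻¹ * d i)) • f i ^ M := by
          apply Finset.sum_congr rfl
          intro i hi
          rw [if_neg (fun hh => histar' (by rw [hh] at hi; exact hi))]
        rw [hsum2]
        have hinv : (d jstar)⁻¹ * d jstar = 1 := inv_mul_cancel₀ hdj
        symm
        rw [hTsum, smul_add, smul_smul, hinv, one_smul]
        have hcancel : (d jstar)⁻¹ • ∑ i ∈ T.erase jstar, d i • f i ^ M
            + ∑ i ∈ T.erase jstar, (-((d jstar)⁻¹ * d i)) • f i ^ M = 0 := by
          rw [Finset.smul_sum, ← Finset.sum_add_distrib]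
          apply Finset.sum_eq_zero
          intro i _
          rw [smul_smul, neg_smul, add_neg_cancel]
        rw [add_assoc, hcancel, add_zero]
  obtain ⟨c2, S2, hS2sub, hrepS2⟩ := hrep2
  obtain ⟨T2, hT2sub, hT2ne, ⟨d2, hd2rep, hd2ne⟩, hT2li⟩ :=
    minrep (fun i => f i ^ M) (pow_ne_zero _ (hf0 jstar)) S2 c2 hrepS2
  have hjT2 : jstar ∉ T2 := fun h =>
    Finset.notMem_erase jstar base (hS2sub (hT2sub h))
  have hT2base : T2 ⊆ base := fun x hx => Finset.mem_of_mem_erase (hS2sub (hT2sub hx))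
  set base2 : Finset (Fin m) := insert jstar T2 with hbase2
  have hbase2sub : base2 ⊆ base := by
    intro x hx
    rcases Finset.mem_insert.mp hx with h | h
    · rw [h]; exact hjmem
    · exact hT2base h
  -- gcd extraction
  obtain ⟨g, hg, hg1⟩ := Finset.extract_gcd f (⟨jstar, Finset.mem_insert_self _ _⟩ :
    base2.Nonempty)
  set h0 : ℂ[X] := base2.gcd f with hh0
  have hh0ne : h0 ≠ 0 := by
    intro hzero
    apply hf0 jstar
    have := hg jstar (Finset.mem_insert_self _ _)
    rw [this, hzero, zero_mul]
  have hgne : ∀ i ∈ base2, g i ≠ 0 := by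
    intro i hi hzero
    apply hf0 i
    have := hg i hi
    rw [this, hzero, mul_zero]
  -- relation for g
  have hrelg : g jstar ^ M * 1 = ∑ i ∈ T2, d2 i • g i ^ M := by
    rw [mul_one]
    have hmain : h0 ^ M * g jstar ^ M = h0 ^ M * ∑ i ∈ T2, d2 i • g i ^ M := by
      have hj := hg jstar (Finset.mem_insert_self _ _)
      calc h0 ^ M * g jstar ^ M = (h0 * g jstar) ^ M := (mul_pow _ _ _).symm
        _ = f jstar ^ M := by rw [← hj]
        _ = ∑ i ∈ T2, d2 i • f i ^ M := hd2rep
        _ = ∑ i ∈ T2, d2 i • (h0 ^ M * g i ^ M) := by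
            apply Finset.sum_congr rfl
            intro i hi
            have hfi := hg i (Finset.mem_insert_of_mem hi)
            rw [hfi, mul_pow]
        _ = h0 ^ M * ∑ i ∈ T2, d2 i • g i ^ M := by
            rw [Finset.mul_sum]
            apply Finset.sum_congr rfl
            intro i _
            rw [mul_smul_comm]
    exact mul_left_cancel₀ (pow_ne_zero M hh0ne) hmain
  -- linear independence of g powers on T2
  have hlig : LinearIndependent ℂ (fun i : T2 => g i ^ M) := by
    rw [Fintype.linearIndependent_iff]
    intro rho hrho
    have hstep : ∑ i : T2, rho i • f (i : Fin m) ^ M = 0 := by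
      have hexp : ∀ i : T2, rho i • f (i : Fin m) ^ M
          = h0 ^ M * (rho i • g (i : Fin m) ^ M) := by
        intro i
        have hfi := hg (i : Fin m) (Finset.mem_insert_of_mem i.2)
        rw [hfi, mul_pow, mul_smul_comm]
      rw [Finset.sum_congr rfl (fun i _ => hexp i), ← Finset.mul_sum, hrho, mul_zero]
    exact Fintype.linearIndependent_iff.mp hT2li rho hstep
  -- selection function
  have hsel_exists : ∀ a : ℂ, (g jstar).IsRoot a → ∃ i ∈ T2, ¬(g i).IsRoot a := by
    intro a ha
    by_contra hcon
    push_neg at hcon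
    have hdvd : (X - C a) ∣ base2.gcd g := by
      apply Finset.dvd_gcd
      intro b hb
      rcases Finset.mem_insert.mp hb with h | h
      · rw [h]; exact dvd_iff_isRoot.mpr ha
      · exact dvd_iff_isRoot.mpr (hcon b h)
    rw [hg1] at hdvd
    have := isUnit_of_dvd_one hdvd
    rw [Polynomial.isUnit_iff] at this
    obtain ⟨r, hr, hXr⟩ := this
    have := congrArg natDegree hXr
    rw [natDegree_X_sub_C, natDegree_C] at this
    exact Nat.one_ne_zero this.symm
  set sel : ℂ → Fin m := fun a =>
    if hcond : ∃ i ∈ T2, ¬(g i).IsRoot a then hcond.choose else hT2ne.choose with hseldef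
  have hselT2 : ∀ a, sel a ∈ T2 := by
    intro a
    rw [hseldef]
    by_cases hcond : ∃ i ∈ T2, ¬(g i).IsRoot a
    · simp only [dif_pos hcond]; exact hcond.choose_spec.1
    · simp only [dif_neg hcond]; exact hT2ne.choose_spec
  have hselroot : ∀ a : ℂ, (g jstar).IsRoot a → (g (sel a)).rootMultiplicity a = 0 := by
    intro a ha
    have hcond := hsel_exists a ha
    rw [hseldef]
    simp only [dif_pos hcond]
    exact rootMultiplicity_eq_zero hcond.choose_spec.2
  -- apply core
  have hT2card : T2.card ≤ m := le_trans (Finset.card_le_card hT2base)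
    (le_trans (Finset.card_le_univ base) (by simp))
  have hcore := core_finset T2 hT2ne (le_trans hT2card (by omega)) g
    (fun i hi => hgne i (Finset.mem_insert_of_mem hi)) hlig d2
    (g jstar) 1 (hgne jstar (Finset.mem_insert_self _ _)) (one_ne_zero : (1:ℂ[X]) ≠ 0) hrelg
    sel hselT2 (fun a => hd2ne _ (hselT2 a))
  -- simplify LHS of hcore
  have hLHS : ∑ a ∈ (g jstar).roots.toFinset, ((g jstar).rootMultiplicity a -
      min ((g jstar).rootMultiplicity a) ((g (sel a)).rootMultiplicity a))
      = (g jstar).natDegree := by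
    rw [← sum_rm_eq_natDegree (g jstar) (hgne jstar (Finset.mem_insert_self _ _))]
    apply Finset.sum_congr rfl
    intro a ha
    have haroot : (g jstar).IsRoot a := by
      rw [Multiset.mem_toFinset] at ha
      exact isRoot_of_mem_roots ha
    rw [hselroot a haroot]
    simp
  rw [hLHS] at hcore
  -- degree comparison
  have hdegg : ∀ i ∈ T2, (g i).natDegree ≤ (g jstar).natDegree := by
    intro i hi
    have h1 : (f i).natDegree ≤ (f jstar).natDegree := hjmax i (hT2base hi)
    have h2 : (f i).natDegree = h0.natDegree + (g i).natDegree := by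
      have hfi := hg i (Finset.mem_insert_of_mem hi)
      rw [hfi, natDegree_mul hh0ne (hgne i (Finset.mem_insert_of_mem hi))]
    have h3 : (f jstar).natDegree = h0.natDegree + (g jstar).natDegree := by
      have hfj := hg jstar (Finset.mem_insert_self _ _)
      rw [hfj, natDegree_mul hh0ne (hgne jstar (Finset.mem_insert_self _ _))]
    omega
  by_cases hdeg0 : (g jstar).natDegree = 0
  · -- proportionality contradiction
    obtain ⟨t, ht⟩ := hT2ne
    have hdegt : (g t).natDegree = 0 := le_antisymm (hdeg0 ▸ hdegg t ht) (Nat.zero_le _)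
    have hgt := eq_C_of_natDegree_eq_zero hdegt
    have hgj := eq_C_of_natDegree_eq_zero hdeg0
    set gam := (g t).coeff 0 with hgam
    set del := (g jstar).coeff 0 with hdel
    have hgamne : gam ≠ 0 := by
      intro hzero
      apply hgne t (Finset.mem_insert_of_mem ht)
      rw [hgt, hzero, map_zero]
    have hdelne : del ≠ 0 := by
      intro hzero
      apply hgne jstar (Finset.mem_insert_self _ _)
      rw [hgj, hzero, map_zero]
    have htne : t ≠ jstar := fun hh => hjT2 (hh ▸ ht)
    refine li_not_prop hf htne (gam * del⁻¹) ?_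
    have hft := hg t (Finset.mem_insert_of_mem ht)
    have hfj := hg jstar (Finset.mem_insert_self _ _)
    rw [hft, hfj, hgt, hgj]
    rw [smul_eq_C_mul, map_mul]
    have : C del⁻¹ * (h0 * C del) = h0 := by
      rw [mul_comm h0 (C del), ← mul_assoc, ← map_mul, inv_mul_cancel₀ hdelne, map_one, one_mul]
    rw [mul_assoc (C gam), this, mul_comm (C gam) h0]
  · -- degree bound contradiction
    have hdegpos : 1 ≤ (g jstar).natDegree := Nat.one_le_iff_ne_zero.mpr hdeg0
    have hsumdeg : ∑ i ∈ T2, (g i).natDegree ≤ T2.card * (g jstar).natDegree := by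
      calc ∑ i ∈ T2, (g i).natDegree ≤ ∑ _i ∈ T2, (g jstar).natDegree :=
            Finset.sum_le_sum hdegg
        _ = T2.card * (g jstar).natDegree := by rw [Finset.sum_const, smul_eq_mul]
    have hchain : (M + 1 - T2.card) * (g jstar).natDegree
        ≤ (T2.card - 1) * (T2.card * (g jstar).natDegree) :=
      le_trans hcore (Nat.mul_le_mul_left _ hsumdeg)
    have hfin : M + 1 - T2.card ≤ (T2.card - 1) * T2.card := by
      rw [← mul_assoc] at hchain
      exact Nat.le_of_mul_le_mul_right
        (by calc (M + 1 - T2.card) * (g jstar).natDegree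
              ≤ (T2.card - 1) * T2.card * (g jstar).natDegree := hchain) hdegpos
    have hcard1 : 1 ≤ T2.card := hT2ne.card_pos
    have : (T2.card - 1) * T2.card ≤ m * m := Nat.mul_le_mul (by omega) hT2card
    omega


end
end NLCPF

open NLCPF in
theorem no_large_coprime_power_factor (k : ℕ) (hk : 2 ≤ k) (ε : ℝ) (hε : 0 < ε) :
    ∃ M₀ : ℕ, ∀ M : ℕ, M₀ ≤ M →
      ∀ (f : Fin (k - 1) → ℂ[X]) (G fk : ℂ[X]),
        LinearIndependent ℂ f →
        (∑ i, f i ^ M) + G ^ M * fk = 0 →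
        ∀ D : ℝ,
          D = max (↑(Finset.univ.sup fun i => (f i).natDegree))
                (((G ^ M * fk).natDegree : ℝ) / M) →
        ¬ (ε * D ≤ (G.natDegree : ℝ) ∧
            ∀ j, ((EuclideanDomain.gcd G (f j)).natDegree : ℝ) < ε * D / (2 * k)) := by
  classical
  refine ⟨k * k + 2 * k + 2 + ⌈(2 * (k:ℝ) * k) / ε⌉₊, ?_⟩
  intro M hM f G fk hli hsum D hD
  rintro ⟨h1, h2⟩
  obtain ⟨KK, hKK⟩ : ∃ q, q = k * k := ⟨k * k, rfl⟩
  rw [← hKK] at hM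
  have hm1 : 0 < k - 1 := by omega
  have hMbig : KK + 2 * k + 2 ≤ M := by
    have := Nat.le_add_right (KK + 2 * k + 2) ⌈(2 * (k:ℝ) * k) / ε⌉₊
    omega
  -- positivity of D
  have hDpos : 0 < D := by
    have hj := h2 ⟨0, hm1⟩
    have hnn : (0:ℝ) ≤ ((EuclideanDomain.gcd G (f ⟨0, hm1⟩)).natDegree : ℝ) := Nat.cast_nonneg _
    have h2k : (0:ℝ) < 2 * k := by positivity
    have h5 : 0 < ε * D / (2 * k) := lt_of_le_of_lt hnn hj
    have h6 : 0 < ε * D := by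
      rcases div_pos_iff.mp h5 with ⟨ha, _⟩ | ⟨_, hb⟩
      · exact ha
      · linarith
    by_contra hc
    push_neg at hc
    have : ε * D ≤ 0 := mul_nonpos_of_nonneg_of_nonpos hε.le hc
    linarith
  by_cases hq0 : G ^ M * fk = 0
  · -- vanishing-sum branch
    have hsum0 : ∑ i, f i ^ M = 0 := by
      rw [hq0, add_zero] at hsum
      exact hsum
    refine sum_pow_eq_zero_contra hm1 f hli ?_ hsum0
    obtain ⟨Q, hQ⟩ : ∃ q, q = (k - 1) * (k - 1) := ⟨(k - 1) * (k - 1), rfl⟩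
    have hQK : Q ≤ KK := by
      rw [hQ, hKK]
      exact Nat.mul_le_mul (by omega) (by omega)
    rw [← hQ]
    omega
  · -- main branch
    have hfk : fk ≠ 0 := fun h => hq0 (by rw [h, mul_zero])
    have hG : G ≠ 0 := by
      intro h
      apply hq0
      rw [h, zero_pow (by omega : M ≠ 0), zero_mul]
    have hf0 : ∀ i, f i ≠ 0 := fun i => hli.ne_zero i
    have hrel0 : G ^ M * (-fk) = ∑ i ∈ Finset.univ, (1:ℂ) • f i ^ M := by
      simp only [one_smul]
      linear_combination -hsum
    have hqne : G ^ M * (-fk) ≠ 0 :=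
      mul_ne_zero (pow_ne_zero _ hG) (neg_ne_zero.mpr hfk)
    obtain ⟨T, hTsub, hTne, ⟨d, hdrep, hdne⟩, hTli⟩ :=
      minrep (fun i => f i ^ M) hqne Finset.univ (fun _ => 1) hrel0
    obtain ⟨j1, hj1⟩ := hTne
    have hsm : T.card ≤ k - 1 := by
      have := Finset.card_le_univ T
      simpa using this
    have hcore := core_finset T ⟨j1, hj1⟩ (by omega) f (fun i _ => hf0 i) hTli d
      G (-fk) hG (neg_ne_zero.mpr hfk) hdrep (fun _ => j1) (fun _ => hj1)
      (fun _ => hdne j1 hj1)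
    set s := T.card with hscard
    set Sd := ∑ a ∈ G.roots.toFinset, (G.rootMultiplicity a -
      min (G.rootMultiplicity a) ((f j1).rootMultiplicity a)) with hSddef
    set gcd1 := EuclideanDomain.gcd G (f j1) with hgcd1
    -- lower bound for Sd
    have hgcdne : gcd1 ≠ 0 := by
      rw [hgcd1]
      intro hzz
      exact hG (EuclideanDomain.gcd_eq_zero_iff.mp hzz).1
    have hmin_le : ∑ a ∈ G.roots.toFinset,
        min (G.rootMultiplicity a) ((f j1).rootMultiplicity a) ≤ gcd1.natDegree := by
      calc ∑ a ∈ G.roots.toFinset, min (G.rootMultiplicity a) ((f j1).rootMultiplicity a)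
          ≤ ∑ a ∈ G.roots.toFinset, gcd1.rootMultiplicity a :=
            Finset.sum_le_sum (fun a _ => min_rm_le_rm_gcd hG a)
        _ ≤ gcd1.natDegree := sum_rm_le_natDegree _ hgcdne _
    have hSd_ge : G.natDegree ≤ Sd + gcd1.natDegree := by
      have hpt : ∑ a ∈ G.roots.toFinset, G.rootMultiplicity a
          = Sd + ∑ a ∈ G.roots.toFinset,
            min (G.rootMultiplicity a) ((f j1).rootMultiplicity a) := by
        rw [hSddef, ← Finset.sum_add_distrib]
        apply Finset.sum_congr rfl
        intro a _
        omega
      rw [← sum_rm_eq_natDegree G hG, hpt]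
      omega
    -- upper bound
    set Dnat := Finset.univ.sup (fun i => (f i).natDegree) with hDnat
    have hdegs : ∑ i ∈ T, (f i).natDegree ≤ s * Dnat := by
      calc ∑ i ∈ T, (f i).natDegree ≤ ∑ _i ∈ T, Dnat :=
            Finset.sum_le_sum (fun i _ => Finset.le_sup (f := fun i => (f i).natDegree) (Finset.mem_univ i))
        _ = s * Dnat := by rw [Finset.sum_const, smul_eq_mul]
    have hchainN : (M + 1 - s) * Sd ≤ k * (k * Dnat) := by
      refine le_trans (le_trans hcore (Nat.mul_le_mul_left _ hdegs)) ?_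
      have hs1 : s ≤ k := by omega
      calc (s - 1) * (s * Dnat) ≤ k * (s * Dnat) := Nat.mul_le_mul_right _ (by omega)
        _ ≤ k * (k * Dnat) := Nat.mul_le_mul_left _ (Nat.mul_le_mul_right _ hs1)
    -- real arithmetic
    have hk2 : (2:ℝ) ≤ (k:ℝ) := by exact_mod_cast hk
    have h2kpos : (0:ℝ) < 2 * k := by positivity
    have hDnatD : ((Dnat : ℕ) : ℝ) ≤ D := by
      rw [hD]
      exact le_max_left _ _
    have hgcdlt : ((gcd1.natDegree : ℕ) : ℝ) < ε * D / (2 * k) := h2 j1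
    -- Sd > ε D / 2
    have hSdR : ε * D / 2 < ((Sd : ℕ) : ℝ) := by
      have hc1 : ((G.natDegree : ℕ) : ℝ) ≤ ((Sd : ℕ) : ℝ) + ((gcd1.natDegree : ℕ) : ℝ) := by
        exact_mod_cast hSd_ge
      have e1 : ((gcd1.natDegree : ℕ) : ℝ) * (2 * k) < ε * D :=
        (lt_div_iff₀ h2kpos).mp hgcdlt
      have e2 : 2 * ((gcd1.natDegree : ℕ) : ℝ) ≤ ((gcd1.natDegree : ℕ) : ℝ) * (2 * k) := by
        nlinarith [Nat.cast_nonneg (α := ℝ) gcd1.natDegree]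
      rw [div_lt_iff₀ (by norm_num : (0:ℝ) < 2)]
      linarith
    -- M + 1 - s large
    have hspos : 0 < M + 1 - s := by omega
    have hceil : (2 * (k:ℝ) * k) / ε ≤ ((M + 1 - s : ℕ) : ℝ) := by
      refine le_trans (Nat.le_ceil _) ?_
      have hcl : ⌈(2 * (k:ℝ) * k) / ε⌉₊ ≤ M + 1 - s := by omega
      exact_mod_cast hcl
    have hA : (0:ℝ) < ((M + 1 - s : ℕ) : ℝ) := by exact_mod_cast hspos
    have hstep1 : (2 * (k:ℝ) * k) / ε * (ε * D / 2) ≤ ((M + 1 - s : ℕ) : ℝ) * (ε * D / 2) :=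
      mul_le_mul_of_nonneg_right hceil (by positivity)
    have hstep2 : ((M + 1 - s : ℕ) : ℝ) * (ε * D / 2) < ((M + 1 - s : ℕ) : ℝ) * ((Sd : ℕ) : ℝ) :=
      mul_lt_mul_of_pos_left hSdR hA
    have hstep3 : ((M + 1 - s : ℕ) : ℝ) * ((Sd : ℕ) : ℝ) ≤ (k:ℝ) * ((k:ℝ) * D) := by
      have hcast : ((M + 1 - s : ℕ) : ℝ) * ((Sd : ℕ) : ℝ) ≤ (k:ℝ) * ((k:ℝ) * ((Dnat : ℕ) : ℝ)) := by
        exact_mod_cast hchainN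
      refine le_trans hcast ?_
      have : (k:ℝ) * ((Dnat : ℕ) : ℝ) ≤ (k:ℝ) * D :=
        mul_le_mul_of_nonneg_left hDnatD (by positivity)
      exact mul_le_mul_of_nonneg_left this (by positivity)
    have hcalc : (2 * (k:ℝ) * k) / ε * (ε * D / 2) = (k:ℝ) * ((k:ℝ) * D) := by
      field_simp
    linarith
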